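/- Let n ≥ 4 and suppose the projective and conformal Weyl tensors of a curvature tensor R_{ij}{}^k{}_l coincide, i.e. 2Σ^{km}_{l[i} ρ_{j]m} = 2S^{km}_{l[i} P_{j]m} where ρ, P are built from the Ricci contraction R_{jl} = R_{kj}{}^k{}_l. Then ρ_{ij} = 2P_{ij} = (r/(n(n−1))) g_{ij} with r = g^{jl}R_{jl}; in particular both Schouten tensors are proportional to the metric. -/

import Mathlib

set_option maxHeartbeats 1000000

section WeylAux

variable {n : ℕ} (g ginv : Fin n → Fin n → ℝ)
  (hgsym : ∀ i j, g i j = g j i)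
  (hginvsym : ∀ i j, ginv i j = ginv j i)
  (hinv : ∀ i j, ∑ k, ginv i k * g k j = if i = j then (1:ℝ) else 0)

include hgsym hginvsym hinv

lemma weyl_hd2 (m p : Fin n) : ∑ k, g m k * ginv k p = if p = m then 1 else 0 := by
  rw [← hinv p m]
  exact Finset.sum_congr rfl fun k _ => by rw [hgsym, hginvsym, mul_comm]

lemma weyl_L1 (f : Fin n → Fin n → ℝ) (j m : Fin n) :
    (∑ k, ∑ i, ∑ l, g m k * ginv i l * (if l = k then f j i else 0)) = f j m := by
  have h1 : ∀ k i : Fin n, (∑ l, g m k * ginv i l * (if l = k then f j i else 0))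
      = g m k * ginv i k * f j i := by
    intro k i
    simp only [mul_ite, mul_zero, Finset.sum_ite_eq', Finset.mem_univ, if_true]
  simp only [h1]
  rw [Finset.sum_comm]
  have h2 : ∀ i : Fin n, (∑ k, g m k * ginv i k * f j i) = (if i = m then 1 else 0) * f j i := by
    intro i
    rw [← Finset.sum_mul, ← weyl_hd2 g ginv hgsym hginvsym hinv m i]
    exact congrArg (· * f j i) (Finset.sum_congr rfl fun k _ => by rw [hginvsym i k])
  simp only [h2, ite_mul, one_mul, zero_mul, Finset.sum_ite_eq', Finset.mem_univ, if_true]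

lemma weyl_L1b (f : Fin n → Fin n → ℝ) (j m : Fin n) :
    (∑ k, ∑ i, ∑ l, g m k * ginv i l * (if l = k then f i j else 0)) = f m j :=
  weyl_L1 g ginv hgsym hginvsym hinv (fun a b => f b a) j m

lemma weyl_L2 (f : Fin n → Fin n → ℝ) (j m : Fin n) :
    (∑ k, ∑ i, ∑ l, g m k * ginv i l * (if i = k then f j l else 0)) = f j m := by
  have h1 : ∀ k : Fin n, (∑ i, ∑ l, g m k * ginv i l * (if i = k then f j l else 0))
      = ∑ l, g m k * ginv k l * f j l := by
    intro k
    simp only [mul_ite, mul_zero, Finset.sum_ite_irrel, Finset.sum_const_zero,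
      Finset.sum_ite_eq', Finset.mem_univ, if_true]
  simp only [h1]
  rw [Finset.sum_comm]
  have h2 : ∀ l : Fin n, (∑ k, g m k * ginv k l * f j l) = (if l = m then 1 else 0) * f j l := by
    intro l
    rw [← Finset.sum_mul, weyl_hd2 g ginv hgsym hginvsym hinv m l]
  simp only [h2, ite_mul, one_mul, zero_mul, Finset.sum_ite_eq', Finset.mem_univ, if_true]

omit hgsym hginvsym hinv in
lemma weyl_L3 (f : Fin n → Fin n → ℝ) (j m : Fin n) :
    (∑ k, ∑ i, ∑ l, g m k * ginv i l * (if j = k then f i l else 0))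
    = g m j * ∑ i, ∑ l, ginv i l * f i l := by
  have h1 : ∀ k : Fin n, (∑ i, ∑ l, g m k * ginv i l * (if j = k then f i l else 0))
      = if j = k then ∑ i, ∑ l, g m k * (ginv i l * f i l) else 0 := by
    intro k
    simp only [mul_ite, mul_zero, Finset.sum_ite_irrel, Finset.sum_const_zero, mul_assoc]
  simp only [h1, Finset.sum_ite_eq, Finset.mem_univ, if_true, ← Finset.mul_sum]

lemma weyl_gQ (P : Fin n → Fin n → ℝ) (j m : Fin n) :
    (∑ k, g m k * ∑ p, ginv k p * P j p) = P j m := by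
  have h1 : ∀ k : Fin n, g m k * ∑ p, ginv k p * P j p = ∑ p, g m k * ginv k p * P j p := by
    intro k; rw [Finset.mul_sum]; exact Finset.sum_congr rfl fun p _ => by ring
  simp only [h1]
  rw [Finset.sum_comm]
  have h2 : ∀ p : Fin n, (∑ k, g m k * ginv k p * P j p) = (if p = m then 1 else 0) * P j p := by
    intro p; rw [← Finset.sum_mul, weyl_hd2 g ginv hgsym hginvsym hinv m p]
  simp only [h2, ite_mul, one_mul, zero_mul, Finset.sum_ite_eq', Finset.mem_univ, if_true]

omit hgsym hginvsym in
lemma weyl_trg : (∑ i : Fin n, ∑ l, ginv i l * g l i) = (n:ℝ) := by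
  have h1 : ∀ i : Fin n, (∑ l, ginv i l * g l i) = 1 := by
    intro i; rw [hinv i i]; simp
  simp [h1]

lemma weyl_L4 (P : Fin n → Fin n → ℝ) (j m : Fin n) :
    (∑ k, ∑ i, ∑ l, g m k * ginv i l * (g l i * ∑ p, ginv k p * P j p))
    = (n:ℝ) * P j m := by
  have h1 : ∀ k : Fin n, (∑ i, ∑ l, g m k * ginv i l * (g l i * ∑ p, ginv k p * P j p))
      = (∑ i, ∑ l, ginv i l * g l i) * (g m k * ∑ p, ginv k p * P j p) := by
    intro k
    rw [Finset.sum_mul]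
    refine Finset.sum_congr rfl fun i _ => ?_
    rw [Finset.sum_mul]
    exact Finset.sum_congr rfl fun l _ => by ring
  simp only [h1]
  rw [← Finset.mul_sum, weyl_trg g ginv hinv, weyl_gQ g ginv hgsym hginvsym hinv P j m]

lemma weyl_L5 (P : Fin n → Fin n → ℝ) (j m : Fin n) :
    (∑ k, ∑ i, ∑ l, g m k * ginv i l * (g l j * ∑ p, ginv k p * P i p))
    = P j m := by
  have h1 : ∀ k i : Fin n, (∑ l, g m k * ginv i l * (g l j * ∑ p, ginv k p * P i p))
      = (if i = j then 1 else 0) * (g m k * ∑ p, ginv k p * P i p) := by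
    intro k i
    rw [← hinv i j, Finset.sum_mul]
    exact Finset.sum_congr rfl fun l _ => by ring
  simp only [h1, ite_mul, one_mul, zero_mul, Finset.sum_ite_eq', Finset.mem_univ, if_true]
  exact weyl_gQ g ginv hgsym hginvsym hinv P j m

end WeylAux

theorem weyl_coincidence_schouten_proportional (n : ℕ) (hn : 4 ≤ n)
    (g ginv : Fin n → Fin n → ℝ)
    (hgsym : ∀ i j, g i j = g j i)
    (hginvsym : ∀ i j, ginv i j = ginv j i)
    (hinv : ∀ i j, ∑ k, ginv i k * g k j = if i = j then (1:ℝ) else 0)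
    (Riem : Fin n → Fin n → Fin n → Fin n → ℝ)
    (Ric ρ P : Fin n → Fin n → ℝ) (r : ℝ)
    (hRic : ∀ j l, Ric j l = ∑ k, Riem k j k l)
    (hr : r = ∑ j, ∑ l, ginv j l * Ric j l)
    (hρ : ∀ i j, ρ i j = (1/((n:ℝ) - 1)) * ((Ric i j + Ric j i)/2)
        + (1/((n:ℝ) + 1)) * ((Ric i j - Ric j i)/2))
    (hP : ∀ i j, P i j = (1/((n:ℝ) - 2)) * ((Ric i j + Ric j i)/2)
        + (1/(n:ℝ)) * ((Ric i j - Ric j i)/2)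
        - (r/(2*((n:ℝ) - 2)*((n:ℝ) - 1))) * g i j)
    (heq : ∀ i j k l, ∑ m,
        (((if l = k then (1:ℝ) else 0) * (if i = m then (1:ℝ) else 0)
            + (if l = m then (1:ℝ) else 0) * (if i = k then (1:ℝ) else 0)) * ρ j m
          - ((if l = k then (1:ℝ) else 0) * (if j = m then (1:ℝ) else 0)
            + (if l = m then (1:ℝ) else 0) * (if j = k then (1:ℝ) else 0)) * ρ i m)
      = ∑ m,
        (((if l = k then (1:ℝ) else 0) * (if i = m then (1:ℝ) else 0)
            + (if l = m then (1:ℝ) else 0) * (if i = k then (1:ℝ) else 0)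
            - g l i * ginv k m) * P j m
          - ((if l = k then (1:ℝ) else 0) * (if j = m then (1:ℝ) else 0)
            + (if l = m then (1:ℝ) else 0) * (if j = k then (1:ℝ) else 0)
            - g l j * ginv k m) * P i m)) :
    ∀ i j, ρ i j = (r/((n:ℝ)*((n:ℝ) - 1))) * g i j
      ∧ P i j = (r/(2*(n:ℝ)*((n:ℝ) - 1))) * g i j
      ∧ ρ i j = 2 * P i j := by
  have hn4 : (4:ℝ) ≤ (n:ℝ) := by exact_mod_cast hn
  have hN0 : (n:ℝ) ≠ 0 := ne_of_gt (by linarith)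
  have hN1 : (n:ℝ) - 1 ≠ 0 := ne_of_gt (by linarith)
  have hN2 : (n:ℝ) - 2 ≠ 0 := ne_of_gt (by linarith)
  have hNp1 : (n:ℝ) + 1 ≠ 0 := ne_of_gt (by linarith)
  -- pointwise form of the hypothesis
  have hE : ∀ i j k l : Fin n,
      ((if l = k then ρ j i else 0) + (if i = k then ρ j l else 0))
        - ((if l = k then ρ i j else 0) + (if j = k then ρ i l else 0))
      = (((if l = k then P j i else 0) + (if i = k then P j l else 0))
          - g l i * ∑ p, ginv k p * P j p)
        - (((if l = k then P i j else 0) + (if j = k then P i l else 0))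
          - g l j * ∑ p, ginv k p * P i p) := by
    intro i j k l
    have hL : (∑ m, (((if l = k then (1:ℝ) else 0) * (if i = m then (1:ℝ) else 0)
            + (if l = m then (1:ℝ) else 0) * (if i = k then (1:ℝ) else 0)) * ρ j m
          - ((if l = k then (1:ℝ) else 0) * (if j = m then (1:ℝ) else 0)
            + (if l = m then (1:ℝ) else 0) * (if j = k then (1:ℝ) else 0)) * ρ i m))
        = ((if l = k then ρ j i else 0) + (if i = k then ρ j l else 0))
          - ((if l = k then ρ i j else 0) + (if j = k then ρ i l else 0)) := by
      simp only [ite_mul, one_mul, zero_mul, add_mul, sub_mul, mul_ite, mul_zero, mul_one,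
        Finset.sum_sub_distrib, Finset.sum_add_distrib, Finset.sum_ite_eq, Finset.sum_ite_eq',
        Finset.mem_univ, if_true, Finset.sum_ite_irrel, Finset.sum_const_zero]
    have hR : (∑ m, (((if l = k then (1:ℝ) else 0) * (if i = m then (1:ℝ) else 0)
            + (if l = m then (1:ℝ) else 0) * (if i = k then (1:ℝ) else 0)
            - g l i * ginv k m) * P j m
          - ((if l = k then (1:ℝ) else 0) * (if j = m then (1:ℝ) else 0)
            + (if l = m then (1:ℝ) else 0) * (if j = k then (1:ℝ) else 0)
            - g l j * ginv k m) * P i m))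
        = (((if l = k then P j i else 0) + (if i = k then P j l else 0))
            - g l i * ∑ p, ginv k p * P j p)
          - (((if l = k then P i j else 0) + (if j = k then P i l else 0))
            - g l j * ∑ p, ginv k p * P i p) := by
      simp only [ite_mul, one_mul, zero_mul, add_mul, sub_mul, mul_ite, mul_zero, mul_one,
        Finset.sum_sub_distrib, Finset.sum_add_distrib, Finset.sum_ite_eq, Finset.sum_ite_eq',
        Finset.mem_univ, if_true, Finset.sum_ite_irrel, Finset.sum_const_zero, mul_assoc,
        ← Finset.mul_sum]
    rw [← hL, ← hR]
    exact heq i j k l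
  -- contraction of the identity with g ⊗ ginv
  have hkey : ∀ j m : Fin n,
      ρ j m + ρ j m - (ρ m j + g m j * (∑ a, ∑ b, ginv a b * ρ a b))
      = (P j m + P j m - (n:ℝ) * P j m)
        - (P m j + g m j * (∑ a, ∑ b, ginv a b * P a b) - P j m) := by
    intro j m
    have e : (∑ k, ∑ i, ∑ l, g m k * ginv i l *
        (((if l = k then ρ j i else 0) + (if i = k then ρ j l else 0))
          - ((if l = k then ρ i j else 0) + (if j = k then ρ i l else 0))))
      = ∑ k, ∑ i, ∑ l, g m k * ginv i l *
        ((((if l = k then P j i else 0) + (if i = k then P j l else 0))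
            - g l i * ∑ p, ginv k p * P j p)
          - (((if l = k then P i j else 0) + (if j = k then P i l else 0))
            - g l j * ∑ p, ginv k p * P i p)) :=
      Finset.sum_congr rfl fun k _ => Finset.sum_congr rfl fun i _ =>
        Finset.sum_congr rfl fun l _ => by rw [hE i j k l]
    simp only [mul_add, mul_sub, Finset.sum_add_distrib, Finset.sum_sub_distrib] at e
    rw [weyl_L1 g ginv hgsym hginvsym hinv ρ j m,
        weyl_L2 g ginv hgsym hginvsym hinv ρ j m,
        weyl_L1b g ginv hgsym hginvsym hinv ρ j m,
        weyl_L3 g ginv ρ j m,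
        weyl_L1 g ginv hgsym hginvsym hinv P j m,
        weyl_L2 g ginv hgsym hginvsym hinv P j m,
        weyl_L1b g ginv hgsym hginvsym hinv P j m,
        weyl_L3 g ginv P j m,
        weyl_L4 g ginv hgsym hginvsym hinv P j m,
        weyl_L5 g ginv hgsym hginvsym hinv P j m] at e
    linarith [e]
  -- trace identities
  have hSa : (∑ a, ∑ b, ginv a b * Ric a b) = r := hr.symm
  have hSb : (∑ a, ∑ b, ginv a b * Ric b a) = r := by
    rw [hr, Finset.sum_comm]
    exact Finset.sum_congr rfl fun a _ => Finset.sum_congr rfl fun b _ => by rw [hginvsym]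
  have hTg : (∑ a, ∑ b, ginv a b * g a b) = (n:ℝ) := by
    rw [← weyl_trg g ginv hinv]
    exact Finset.sum_congr rfl fun a _ => Finset.sum_congr rfl fun b _ => by rw [hgsym a b]
  have htrho : (∑ a, ∑ b, ginv a b * ρ a b) = (1/((n:ℝ)-1)) * r := by
    have h : ∀ a b : Fin n, ginv a b * ρ a b
        = (1/((n:ℝ)-1)/2) * (ginv a b * Ric a b) + (1/((n:ℝ)-1)/2) * (ginv a b * Ric b a)
          + ((1/((n:ℝ)+1)/2) * (ginv a b * Ric a b) - (1/((n:ℝ)+1)/2) * (ginv a b * Ric b a)) := by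
      intro a b; rw [hρ]; ring
    simp only [h]
    simp only [Finset.sum_add_distrib, Finset.sum_sub_distrib, ← Finset.mul_sum]
    rw [hSa, hSb]; ring
  have htP : (∑ a, ∑ b, ginv a b * P a b)
      = (1/((n:ℝ)-2)) * r - (r/(2*((n:ℝ)-2)*((n:ℝ)-1))) * (n:ℝ) := by
    have h : ∀ a b : Fin n, ginv a b * P a b
        = (1/((n:ℝ)-2)/2) * (ginv a b * Ric a b) + (1/((n:ℝ)-2)/2) * (ginv a b * Ric b a)
          + ((1/((n:ℝ))/2) * (ginv a b * Ric a b) - (1/((n:ℝ))/2) * (ginv a b * Ric b a))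
          - (r/(2*((n:ℝ)-2)*((n:ℝ)-1))) * (ginv a b * g a b) := by
      intro a b; rw [hP]; ring
    simp only [h]
    simp only [Finset.sum_add_distrib, Finset.sum_sub_distrib, ← Finset.mul_sum]
    rw [hSa, hSb, hTg]; ring
  -- eliminate: Ricci is pure trace
  have hRicEq : ∀ j m : Fin n, (n:ℝ) * Ric j m = r * g j m := by
    intro j m
    have e1 := hkey j m
    have e2 := hkey m j
    rw [hgsym j m] at e2
    have h3 : 3 * (ρ j m - ρ m j) = (4 - (n:ℝ)) * (P j m - P m j) := by
      linear_combination e1 - e2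
    have h5 : (ρ j m + ρ m j) - 2 * (g m j * (∑ a, ∑ b, ginv a b * ρ a b))
        = (2 - (n:ℝ)) * (P j m + P m j) - 2 * (g m j * (∑ a, ∑ b, ginv a b * P a b)) := by
      linear_combination e1 + e2
    rw [hρ j m, hρ m j, hP j m, hP m j, hgsym j m] at h3 h5
    rw [htrho, htP] at h5
    field_simp at h3 h5
    have hxy : Ric j m = Ric m j := by
      have h6 : (32*((n:ℝ)-1)^2*((n:ℝ)-2)^3*((n:ℝ)+2)) * (Ric j m - Ric m j) = 0 := by
        linear_combination 16*((n:ℝ)-1)*((n:ℝ)-2) * h3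
      have hpos : (0:ℝ) < 32*((n:ℝ)-1)^2*((n:ℝ)-2)^3*((n:ℝ)+2) := by
        have h1 : (0:ℝ) < (n:ℝ)-1 := by linarith
        have h2 : (0:ℝ) < (n:ℝ)-2 := by linarith
        have h4 : (0:ℝ) < (n:ℝ)+2 := by linarith
        exact mul_pos (mul_pos (mul_pos (by norm_num : (0:ℝ) < 32) (pow_pos h1 2)) (pow_pos h2 3)) h4
      have h8 := (mul_eq_zero.mp h6).resolve_left (ne_of_gt hpos)
      linarith
    rw [hgsym j m, hxy]
    rw [hxy] at h5
    have h7 : (64*(n:ℝ)^2*((n:ℝ)-1)^3*((n:ℝ)-2)^4*((n:ℝ)+1)) * 2 * ((n:ℝ) * Ric m j - r * g m j) = 0 := by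
      linear_combination 32*(n:ℝ)*((n:ℝ)-1)^3*((n:ℝ)-2)^3 * h5
    have hpos : (0:ℝ) < 64*(n:ℝ)^2*((n:ℝ)-1)^3*((n:ℝ)-2)^4*((n:ℝ)+1) * 2 := by
      have h0 : (0:ℝ) < (n:ℝ) := by linarith
      have h1 : (0:ℝ) < (n:ℝ)-1 := by linarith
      have h2 : (0:ℝ) < (n:ℝ)-2 := by linarith
      have h4 : (0:ℝ) < (n:ℝ)+1 := by linarith
      have := mul_pos (mul_pos (mul_pos (mul_pos (by norm_num : (0:ℝ) < 64) (pow_pos h0 2)) (pow_pos h1 3)) (pow_pos h2 4)) h4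
      linarith
    have h8 := (mul_eq_zero.mp h7).resolve_left (ne_of_gt hpos)
    linarith
  have hRic' : ∀ i j : Fin n, Ric i j = r / (n:ℝ) * g i j := by
    intro i j
    have h := hRicEq i j
    field_simp
    linarith [h]
  intro i j
  refine ⟨?_, ?_, ?_⟩
  · rw [hρ, hRic' i j, hRic' j i, hgsym j i]
    field_simp
    ring
  · rw [hP, hRic' i j, hRic' j i, hgsym j i]
    field_simp
    ring
  · rw [hρ, hP, hRic' i j, hRic' j i, hgsym j i]
    field_simp
    ring
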